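/- For α ∈ [0,1], a positive semidefinite n×n matrix T, and a Hermitian n×n matrix A, Tr[(T^{1/2} A)²] ≤ Tr[T^α A T^{1-α} A] ≤ Tr[T A²]. -/

import Mathlib

open Matrix ComplexOrder

private lemma rpow_mix_le_add {x y α : ℝ} (hx : 0 ≤ x) (hy : 0 ≤ y)
    (h0 : 0 ≤ α) (h1 : α ≤ 1) :
    x ^ α * y ^ (1 - α) + x ^ (1 - α) * y ^ α ≤ x + y := by
  have h1' : 0 ≤ 1 - α := by linarith
  have e1 : x ^ α * x ^ (1 - α) = x := by
    rw [← Real.rpow_add' hx (by norm_num)]; simp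
  have e2 : y ^ α * y ^ (1 - α) = y := by
    rw [← Real.rpow_add' hy (by norm_num)]; simp
  have mono : 0 ≤ (x ^ α - y ^ α) * (x ^ (1 - α) - y ^ (1 - α)) := by
    rcases le_total x y with h | h
    · have a1 : x ^ α ≤ y ^ α := Real.rpow_le_rpow hx h h0
      have a2 : x ^ (1 - α) ≤ y ^ (1 - α) := Real.rpow_le_rpow hx h h1'
      nlinarith
    · have a1 : y ^ α ≤ x ^ α := Real.rpow_le_rpow hy h h0
      have a2 : y ^ (1 - α) ≤ x ^ (1 - α) := Real.rpow_le_rpow hy h h1'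
      nlinarith
  nlinarith

private lemma two_sqrt_le_rpow_mix {x y α : ℝ} (hx : 0 ≤ x) (hy : 0 ≤ y)
    (h0 : 0 ≤ α) (h1 : α ≤ 1) :
    2 * (x ^ ((2 : ℝ)⁻¹) * y ^ ((2 : ℝ)⁻¹)) ≤ x ^ α * y ^ (1 - α) + x ^ (1 - α) * y ^ α := by
  set p := x ^ (α / 2) * y ^ ((1 - α) / 2) with hp
  set q := x ^ ((1 - α) / 2) * y ^ (α / 2) with hq
  have hp2 : p ^ 2 = x ^ α * y ^ (1 - α) := by
    rw [hp, mul_pow, ← Real.rpow_natCast (x ^ (α / 2)) 2, ← Real.rpow_natCast (y ^ ((1 - α) / 2)) 2,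
      ← Real.rpow_mul hx, ← Real.rpow_mul hy]
    norm_num
  have hq2 : q ^ 2 = x ^ (1 - α) * y ^ α := by
    rw [hq, mul_pow, ← Real.rpow_natCast (x ^ ((1 - α) / 2)) 2, ← Real.rpow_natCast (y ^ (α / 2)) 2,
      ← Real.rpow_mul hx, ← Real.rpow_mul hy]
    norm_num
  have hpq : p * q = x ^ ((2 : ℝ)⁻¹) * y ^ ((2 : ℝ)⁻¹) := by
    rw [hp, hq]
    have hs1 : α / 2 + (1 - α) / 2 = (2 : ℝ)⁻¹ := by ring
    have hs2 : (1 - α) / 2 + α / 2 = (2 : ℝ)⁻¹ := by ring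
    have ex : x ^ (α / 2) * x ^ ((1 - α) / 2) = x ^ ((2 : ℝ)⁻¹) := by
      rw [← Real.rpow_add' hx (by rw [hs1]; norm_num), hs1]
    have ey : y ^ ((1 - α) / 2) * y ^ (α / 2) = y ^ ((2 : ℝ)⁻¹) := by
      rw [← Real.rpow_add' hy (by rw [hs2]; norm_num), hs2]
    calc x ^ (α / 2) * y ^ ((1 - α) / 2) * (x ^ ((1 - α) / 2) * y ^ (α / 2))
        = (x ^ (α / 2) * x ^ ((1 - α) / 2)) * (y ^ ((1 - α) / 2) * y ^ (α / 2)) := by ring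
      _ = _ := by rw [ex, ey]
  nlinarith [sq_nonneg (p - q)]

private lemma sum_mix_chain {n : ℕ} (x : Fin n → ℝ) (hx : ∀ i, 0 ≤ x i)
    (c : Fin n → Fin n → ℝ) (hc : ∀ i j, 0 ≤ c i j) (hsym : ∀ i j, c i j = c j i)
    {α : ℝ} (h0 : 0 ≤ α) (h1 : α ≤ 1) :
    (∑ i, ∑ j, (x i) ^ ((2 : ℝ)⁻¹) * (x j) ^ ((2 : ℝ)⁻¹) * c i j ≤
      ∑ i, ∑ j, (x i) ^ α * (x j) ^ (1 - α) * c i j) ∧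
    (∑ i, ∑ j, (x i) ^ α * (x j) ^ (1 - α) * c i j ≤ ∑ i, ∑ j, x i * c i j) := by
  have hswap : ∀ f g : ℝ → ℝ,
      ∑ i, ∑ j, f (x i) * g (x j) * c i j = ∑ i, ∑ j, g (x i) * f (x j) * c i j := by
    intro f g
    rw [Finset.sum_comm]
    refine Finset.sum_congr rfl fun i _ => Finset.sum_congr rfl fun j _ => ?_
    rw [hsym i j]; ring
  have key : ∀ a b : ℝ, 2 * a ≤ 2 * b → a ≤ b := fun a b h => by linarith
  constructor
  · apply key
    have e1 : 2 * ∑ i, ∑ j, (x i) ^ ((2 : ℝ)⁻¹) * (x j) ^ ((2 : ℝ)⁻¹) * c i j =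
        ∑ i, ∑ j, 2 * ((x i) ^ ((2 : ℝ)⁻¹) * (x j) ^ ((2 : ℝ)⁻¹)) * c i j := by
      rw [Finset.mul_sum]
      refine Finset.sum_congr rfl fun i _ => ?_
      rw [Finset.mul_sum]
      exact Finset.sum_congr rfl fun j _ => by ring
    have e2 : 2 * ∑ i, ∑ j, (x i) ^ α * (x j) ^ (1 - α) * c i j =
        ∑ i, ∑ j, ((x i) ^ α * (x j) ^ (1 - α) + (x i) ^ (1 - α) * (x j) ^ α) * c i j := by
      have := hswap (fun t => t ^ α) (fun t => t ^ (1 - α))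
      rw [two_mul]
      nth_rewrite 2 [this]
      rw [← Finset.sum_add_distrib]
      refine Finset.sum_congr rfl fun i _ => ?_
      rw [← Finset.sum_add_distrib]
      exact Finset.sum_congr rfl fun j _ => by ring
    rw [e1, e2]
    refine Finset.sum_le_sum fun i _ => Finset.sum_le_sum fun j _ => ?_
    exact mul_le_mul_of_nonneg_right
      (two_sqrt_le_rpow_mix (hx i) (hx j) h0 h1) (hc i j)
  · apply key
    have e2 : 2 * ∑ i, ∑ j, (x i) ^ α * (x j) ^ (1 - α) * c i j =
        ∑ i, ∑ j, ((x i) ^ α * (x j) ^ (1 - α) + (x i) ^ (1 - α) * (x j) ^ α) * c i j := by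
      have := hswap (fun t => t ^ α) (fun t => t ^ (1 - α))
      rw [two_mul]
      nth_rewrite 2 [this]
      rw [← Finset.sum_add_distrib]
      refine Finset.sum_congr rfl fun i _ => ?_
      rw [← Finset.sum_add_distrib]
      exact Finset.sum_congr rfl fun j _ => by ring
    have e3 : 2 * ∑ i, ∑ j, x i * c i j = ∑ i, ∑ j, (x i + x j) * c i j := by
      have := hswap (fun t => t) (fun _ => 1)
      simp only [mul_one, one_mul] at this
      rw [two_mul]
      nth_rewrite 2 [this]
      rw [← Finset.sum_add_distrib]
      refine Finset.sum_congr rfl fun i _ => ?_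
      rw [← Finset.sum_add_distrib]
      exact Finset.sum_congr rfl fun j _ => by ring
    rw [e2, e3]
    refine Finset.sum_le_sum fun i _ => Finset.sum_le_sum fun j _ => ?_
    exact mul_le_mul_of_nonneg_right
      (rpow_mix_le_add (hx i) (hx j) h0 h1) (hc i j)

private lemma trace_cfc_mul_cfc {n : ℕ} (T A : Matrix (Fin n) (Fin n) ℂ)
    (hT : T.IsHermitian) (hA : A.IsHermitian) (f g : ℝ → ℝ) :
    trace (hT.cfc f * A * hT.cfc g * A) =
      ((∑ i, ∑ j, f (hT.eigenvalues i) * g (hT.eigenvalues j) *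
        Complex.normSq ((star (hT.eigenvectorUnitary : Matrix (Fin n) (Fin n) ℂ) * A *
          (hT.eigenvectorUnitary : Matrix (Fin n) (Fin n) ℂ)) i j) : ℝ) : ℂ) := by
  set U : Matrix (Fin n) (Fin n) ℂ := (hT.eigenvectorUnitary : Matrix (Fin n) (Fin n) ℂ) with hU
  set B : Matrix (Fin n) (Fin n) ℂ := star U * A * U with hB
  have hU1 : star U * U = 1 := Unitary.star_mul_self_of_mem hT.eigenvectorUnitary.2
  have hBH : B.IsHermitian := by
    rw [hB, star_eq_conjTranspose]
    exact isHermitian_conjTranspose_mul_mul U hA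
  set Df : Matrix (Fin n) (Fin n) ℂ :=
    diagonal (Complex.ofReal ∘ f ∘ hT.eigenvalues) with hDf
  set Dg : Matrix (Fin n) (Fin n) ℂ :=
    diagonal (Complex.ofReal ∘ g ∘ hT.eigenvalues) with hDg
  have hcfcf : hT.cfc f = U * Df * star U := rfl
  have hcfcg : hT.cfc g = U * Dg * star U := rfl
  have step1 : trace (hT.cfc f * A * hT.cfc g * A) = trace (Df * (B * (Dg * B))) := by
    rw [hcfcf, hcfcg]
    have h1 : U * Df * star U * A * (U * Dg * star U) * A =
        U * (Df * (star U * (A * (U * (Dg * (star U * A)))))) := by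
      simp only [Matrix.mul_assoc]
    rw [h1, Matrix.trace_mul_comm]
    have h2 : Df * (star U * (A * (U * (Dg * (star U * A))))) * U =
        Df * (B * (Dg * B)) := by
      simp only [hB, Matrix.mul_assoc]
    rw [h2]
  rw [step1]
  have entry : ∀ i, (Df * (B * (Dg * B))) i i =
      ∑ j, (f (hT.eigenvalues i) : ℂ) * (g (hT.eigenvalues j) : ℂ) *
        (Complex.normSq (B i j) : ℂ) := by
    intro i
    rw [hDf, diagonal_mul]
    simp only [Function.comp_apply]
    rw [mul_apply, Finset.mul_sum]
    refine Finset.sum_congr rfl fun j _ => ?_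
    rw [hDg, diagonal_mul]
    simp only [Function.comp_apply]
    rw [show B j i = star (B i j) from (hBH.apply j i).symm, Complex.star_def,
      ← Complex.mul_conj]
    ring
  rw [Matrix.trace]
  push_cast
  simp only [Matrix.diag]
  exact Finset.sum_congr rfl fun i _ => entry i

open Matrix ComplexOrder in
theorem trace_sqrt_chain {n : ℕ} (α : ℝ) (hα : α ∈ Set.Icc (0 : ℝ) 1)
    (T A : Matrix (Fin n) (Fin n) ℂ) (hT : T.PosSemidef) (hA : A.IsHermitian) :
    trace ((hT.1.cfc (fun x : ℝ => x ^ ((2 : ℝ)⁻¹)) * A) ^ 2) ≤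
        trace (hT.1.cfc (fun x : ℝ => x ^ α) * A * hT.1.cfc (fun x : ℝ => x ^ (1 - α)) * A) ∧
      trace (hT.1.cfc (fun x : ℝ => x ^ α) * A * hT.1.cfc (fun x : ℝ => x ^ (1 - α)) * A) ≤
        trace (T * A ^ 2) := by
  obtain ⟨h0, h1⟩ := hα
  set c : Fin n → Fin n → ℝ := fun i j =>
    Complex.normSq ((star (hT.1.eigenvectorUnitary : Matrix (Fin n) (Fin n) ℂ) * A *
      (hT.1.eigenvectorUnitary : Matrix (Fin n) (Fin n) ℂ)) i j) with hc_def
  have hBH : (star (hT.1.eigenvectorUnitary : Matrix (Fin n) (Fin n) ℂ) * A *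
      (hT.1.eigenvectorUnitary : Matrix (Fin n) (Fin n) ℂ)).IsHermitian := by
    rw [star_eq_conjTranspose]
    exact isHermitian_conjTranspose_mul_mul _ hA
  have hc_nonneg : ∀ i j, 0 ≤ c i j := fun i j => Complex.normSq_nonneg _
  have hc_sym : ∀ i j, c i j = c j i := by
    intro i j
    rw [hc_def]
    simp only
    rw [← hBH.apply j i]
    simp [Complex.normSq_conj]
  have hx : ∀ i, 0 ≤ hT.1.eigenvalues i := fun i => hT.eigenvalues_nonneg i
  -- middle term
  have hmid := trace_cfc_mul_cfc T A hT.1 hA (fun x => x ^ α) (fun x => x ^ (1 - α))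
  -- left term
  have hsq : (hT.1.cfc (fun x : ℝ => x ^ ((2 : ℝ)⁻¹)) * A) ^ 2 =
      hT.1.cfc (fun x : ℝ => x ^ ((2 : ℝ)⁻¹)) * A *
        hT.1.cfc (fun x : ℝ => x ^ ((2 : ℝ)⁻¹)) * A := by
    rw [pow_two]; simp only [Matrix.mul_assoc]
  have hleft := trace_cfc_mul_cfc T A hT.1 hA
    (fun x => x ^ ((2 : ℝ)⁻¹)) (fun x => x ^ ((2 : ℝ)⁻¹))
  -- right term
  have hid : hT.1.cfc (fun x : ℝ => x) = T := by
    rw [Matrix.IsHermitian.cfc]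
    exact hT.1.spectral_theorem.symm
  have hone : hT.1.cfc (fun _ : ℝ => 1) = 1 := by
    rw [Matrix.IsHermitian.cfc]
    have : diagonal ((RCLike.ofReal : ℝ → ℂ) ∘ (fun _ : ℝ => 1) ∘ hT.1.eigenvalues) =
        (1 : Matrix (Fin n) (Fin n) ℂ) := by
      simp [Function.comp_def]
    rw [this]
    exact map_one _
  have hTA2 : T * A ^ 2 = hT.1.cfc (fun x : ℝ => x) * A * hT.1.cfc (fun _ : ℝ => 1) * A := by
    rw [hid, hone, pow_two]
    simp only [Matrix.mul_one, Matrix.mul_assoc]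
  have hright := trace_cfc_mul_cfc T A hT.1 hA (fun x => x) (fun _ => 1)
  have hsums := sum_mix_chain hT.1.eigenvalues hx c hc_nonneg hc_sym h0 h1
  constructor
  · rw [hsq, hleft, hmid, Complex.real_le_real]
    exact hsums.1
  · rw [hmid, hTA2, hright, Complex.real_le_real]
    calc ∑ i, ∑ j, hT.1.eigenvalues i ^ α * hT.1.eigenvalues j ^ (1 - α) * c i j
        ≤ ∑ i, ∑ j, hT.1.eigenvalues i * c i j := hsums.2
      _ = ∑ i, ∑ j, hT.1.eigenvalues i * 1 * c i j := by simp
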